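/- Let G be an undirected social network and let p = (p_i)_{i∈V} be any pricing-probability vector with p_i ∈ [1/2, 1]. If π is a bijection from V to {1, …, |V|} that orders the buyers in non-increasing order of their pricing probabilities (i.e., π(i) < π(j) implies p_i ≥ p_j), then for every bijection σ : V → {1, …, |V|} one has R(σ, p) ≤ R(π, p). In other words, approaching the buyers in non-increasing order of their pricing probabilities maximizes the revenue extracted from G under p. -/

import Mathlib

open Finset

/-- The revenue of a marketing strategy `(π, p)` on an undirected social network with
weights `w`: `R(π, p) = Σ_i p_i (1 - p_i) (w_ii + Σ_{j : π(j) < π(i)} p_j w_ji)`. -/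
noncomputable def revenue {V : Type*} [Fintype V] [DecidableEq V]
    (w : V → V → ℝ) (π : V ≃ Fin (Fintype.card V)) (p : V → ℝ) : ℝ :=
  ∑ i, p i * (1 - p i) *
    (w i i + ∑ j ∈ univ.filter (fun j => π j < π i), p j * w j i)

private lemma revenue_eq_aux {V : Type*} [Fintype V] [DecidableEq V]
    (w : V → V → ℝ) (τ : V ≃ Fin (Fintype.card V)) (p : V → ℝ) :
    revenue w τ p = (∑ i, p i * (1 - p i) * w i i)
      + ∑ i, ∑ j, (if τ j < τ i then p i * (1 - p i) * (p j * w j i) else 0) := by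
  unfold revenue
  rw [← Finset.sum_add_distrib]
  refine Finset.sum_congr rfl fun i _ => ?_
  rw [mul_add, Finset.sum_filter, Finset.mul_sum]
  congr 1
  refine Finset.sum_congr rfl fun j _ => ?_
  split <;> simp

/-- Approaching the buyers in non-increasing order of their pricing probabilities
maximizes the revenue extracted from an undirected social network under `p`. -/
theorem nonincreasing_order_maximizes_revenue
    {V : Type*} [Fintype V] [DecidableEq V] (w : V → V → ℝ)
    (hsymm : ∀ i j, w i j = w j i) (hnonneg : ∀ i j, 0 ≤ w i j)
    (p : V → ℝ) (hp : ∀ i, 1/2 ≤ p i ∧ p i ≤ 1)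
    (π : V ≃ Fin (Fintype.card V))
    (hπ : ∀ i j, π i < π j → p j ≤ p i) :
    ∀ σ : V ≃ Fin (Fintype.card V), revenue w σ p ≤ revenue w π p := by
  intro σ
  set F : (V ≃ Fin (Fintype.card V)) → V → V → ℝ :=
    fun τ i j => if τ j < τ i then p i * (1 - p i) * (p j * w j i) else 0 with hF
  have hsum : ∀ τ : V ≃ Fin (Fintype.card V),
      2 * (∑ i, ∑ j, F τ i j) = ∑ i, ∑ j, (F τ i j + F τ j i) := by
    intro τ
    have : (∑ i, ∑ j, F τ j i) = ∑ i, ∑ j, F τ i j := Finset.sum_comm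
    simp only [Finset.sum_add_distrib]
    rw [this]; ring
  have hpair : ∀ i j, F σ i j + F σ j i ≤ F π i j + F π j i := by
    intro i j
    by_cases hij : i = j
    · subst hij; simp [hF]
    have hinj : ∀ τ : V ≃ Fin (Fintype.card V), τ i ≠ τ j := fun τ h =>
      hij (τ.injective h)
    have hpi := hp i; have hpj := hp j
    have hw := hsymm i j
    have hwn := hnonneg i j
    have key : ∀ a b : V, p b ≤ p a →
        p a * (1 - p a) * (p b * w b a) ≤ p b * (1 - p b) * (p a * w a b) := by
      intro a b hab
      have ha := (hp a).1; have hb := (hp b).1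
      have h1 : 0 ≤ p a * p b * w a b :=
        mul_nonneg (mul_nonneg (by linarith) (by linarith)) (hnonneg a b)
      have h2 : (1 : ℝ) - p a ≤ 1 - p b := by linarith
      have := mul_le_mul_of_nonneg_left h2 h1
      rw [hsymm b a]; nlinarith
    rcases lt_trichotomy (π i) (π j) with hπij | hπij | hπij
    · have hRHS : F π i j + F π j i = p j * (1 - p j) * (p i * w i j) := by
        simp [hF, hπij, not_lt.mpr hπij.le]
      rw [hRHS]
      rcases lt_trichotomy (σ i) (σ j) with hσij | hσij | hσij
      · simp [hF, hσij, not_lt.mpr hσij.le]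
      · exact absurd hσij (hinj σ)
      · simp only [hF, if_pos hσij, if_neg (not_lt.mpr hσij.le), add_zero]
        exact key i j (hπ i j hπij)
    · exact absurd hπij (hinj π)
    · have hRHS : F π i j + F π j i = p i * (1 - p i) * (p j * w j i) := by
        simp [hF, hπij, not_lt.mpr hπij.le]
      rw [hRHS]
      rcases lt_trichotomy (σ i) (σ j) with hσij | hσij | hσij
      · simp only [hF, if_pos hσij, if_neg (not_lt.mpr hσij.le), zero_add]
        exact key j i (hπ j i hπij)
      · exact absurd hσij (hinj σ)
      · simp [hF, hσij, not_lt.mpr hσij.le]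
  have hsums : (∑ i, ∑ j, F σ i j) ≤ ∑ i, ∑ j, F π i j := by
    have h1 : 2 * (∑ i, ∑ j, F σ i j) ≤ 2 * (∑ i, ∑ j, F π i j) := by
      rw [hsum σ, hsum π]
      exact Finset.sum_le_sum fun i _ => Finset.sum_le_sum fun j _ => hpair i j
    linarith
  rw [revenue_eq_aux, revenue_eq_aux]
  exact add_le_add le_rfl hsums
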